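/- Let N > 1, T > 0 and let u : (0,T) → ℝ be differentiable with u'(t) + u(t)²/(N−1) ≤ 0 for all t ∈ (0,T), and suppose that t·u(t) → N−1 as t → 0⁺. Then u(t) ≤ (N−1)/t for all t ∈ (0,T). -/

import Mathlib

/-- Riccati comparison in the flat case: if `u' + u²/(N-1) ≤ 0` on `(0,T)` and `t·u(t) → N-1`
as `t → 0⁺`, then `u(t) ≤ (N-1)/t` on `(0,T)`. -/
theorem riccati_comparison_flat
    (N T : ℝ) (hN : 1 < N) (hT : 0 < T)
    (u u' : ℝ → ℝ)
    (hu : ∀ t ∈ Set.Ioo 0 T, HasDerivAt u (u' t) t)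
    (hineq : ∀ t ∈ Set.Ioo 0 T, u' t + (u t) ^ 2 / (N - 1) ≤ 0)
    (hlim : Filter.Tendsto (fun t => t * u t) (nhdsWithin 0 (Set.Ioi 0)) (nhds (N - 1))) :
    ∀ t ∈ Set.Ioo 0 T, u t ≤ (N - 1) / t := by
  have hN1 : (0:ℝ) < N - 1 := by linarith
  set g : ℝ → ℝ := fun t => t ^ 2 * u t - (N - 1) * t with hg
  -- derivative of g
  have hg' : ∀ t ∈ Set.Ioo 0 T,
      HasDerivAt g (2 * t * u t + t ^ 2 * u' t - (N - 1)) t := by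
    intro t ht
    have h1 : HasDerivAt (fun t : ℝ => t ^ 2 * u t) (2 * t * u t + t ^ 2 * u' t) t := by
      have := (hasDerivAt_pow 2 t).mul (hu t ht)
      exact this.congr_deriv (by norm_num [mul_comm])
    have h2 : HasDerivAt (fun t : ℝ => (N - 1) * t) (N - 1) t := by
      simpa using (hasDerivAt_id t).const_mul (N - 1)
    exact h1.sub h2
  -- g' ≤ 0
  have hg'le : ∀ t ∈ Set.Ioo 0 T, 2 * t * u t + t ^ 2 * u' t - (N - 1) ≤ 0 := by
    intro t ht
    have h := hineq t ht
    have ht0 : 0 < t := ht.1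
    have key : u' t ≤ -(u t ^ 2 / (N - 1)) := by linarith
    have h2 : t ^ 2 * u' t ≤ t ^ 2 * (-(u t ^ 2 / (N - 1))) :=
      mul_le_mul_of_nonneg_left key (by positivity)
    have h3 : 2 * t * u t - t ^ 2 * (u t ^ 2 / (N - 1)) - (N - 1) =
        -((t * u t - (N - 1)) ^ 2) / (N - 1) := by
      field_simp; ring
    have h4 : -((t * u t - (N - 1)) ^ 2) / (N - 1) ≤ 0 :=
      div_nonpos_of_nonpos_of_nonneg (neg_nonpos.mpr (sq_nonneg _)) (le_of_lt hN1)
    linarith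
  -- g is antitone on Ioo 0 T
  have hanti : AntitoneOn g (Set.Ioo 0 T) := by
    apply antitoneOn_of_deriv_nonpos (convex_Ioo 0 T)
    · exact fun t ht => ((hg' t ht).continuousAt.continuousWithinAt)
    · intro t ht
      rw [interior_Ioo] at ht
      exact (hg' t ht).differentiableAt.differentiableWithinAt
    · intro t ht
      rw [interior_Ioo] at ht
      rw [(hg' t ht).deriv]
      exact hg'le t ht
  -- g tends to 0 at 0⁺
  have hgl : Filter.Tendsto g (nhdsWithin 0 (Set.Ioi 0)) (nhds 0) := by
    have h1 : Filter.Tendsto (fun t : ℝ => t * (t * u t - (N - 1)))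
        (nhdsWithin 0 (Set.Ioi 0)) (nhds (0 * ((N - 1) - (N - 1)))) := by
      exact (Filter.tendsto_id.mono_left nhdsWithin_le_nhds).mul
        ((hlim.sub tendsto_const_nhds))
    have h2 : (fun t : ℝ => t * (t * u t - (N - 1))) = g := by
      funext t; simp [hg]; ring
    rw [h2] at h1
    simpa using h1
  -- conclude g ≤ 0
  intro t ht
  have hgt : g t ≤ 0 := by
    have hev : ∀ᶠ s in nhdsWithin 0 (Set.Ioi 0), g t ≤ g s := by
      have : Set.Ioo (0:ℝ) t ∈ nhdsWithin 0 (Set.Ioi 0) := by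
        apply Ioo_mem_nhdsGT_of_mem
        exact ⟨le_refl _, ht.1⟩
      filter_upwards [this] with s hs
      exact hanti ⟨hs.1, hs.2.trans ht.2⟩ ht (le_of_lt hs.2)
    exact ge_of_tendsto hgl hev
  have ht0 : 0 < t := ht.1
  rw [le_div_iff₀ ht0]
  have : t ^ 2 * u t ≤ (N - 1) * t := by simpa [hg] using hgt
  nlinarith
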